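/- Let K, K_1, …, K_n be compact Hausdorff spaces, π_i : K → K_i continuous maps such that the combined map x ↦ (π_1(x), …, π_n(x)) is surjective onto K_1 × ⋯ × K_n, and μ_i a regular Borel probability measure on K_i for each i. Let φ : K → ℝ be continuous, ε > 0, and suppose ψ⁻, ψ⁺ : K → ℝ are functions of the form ψ^±(x) = Σ_{j=1}^m ∏_{i=1}^n θ^±_{ij}(π_i(x)) with θ^±_{ij} : K_i → ℝ continuous, satisfying ψ⁻(x) ≤ φ(x) ≤ ψ⁺(x) for all x ∈ K and Σ_{j=1}^m ∏_{i=1}^n ∫ θ⁺_{ij} dμ_i − Σ_{j=1}^m ∏_{i=1}^n ∫ θ⁻_{ij} dμ_i ≤ ε. Then there exist, for each i, a finite family of continuous functions u_{i,k} : K_i → [0, 1] (k ∈ F_i) with Σ_{k ∈ F_i} u_{i,k} = 1 pointwise, such that, setting for each κ ∈ ∏_{i=1}^n F_i: π_κ(x) = ∏_{i=1}^n u_{i,κ(i)}(π_i(x)), and for each κ with nonempty support { x ∈ K : π_κ(x) > 0 }: r_κ⁻ = inf { φ(x) : π_κ(x) > 0 } and r_κ⁺ = sup { φ(x) : π_κ(x)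 > 0 }, the functions χ^± = Σ_{κ : support of π_κ nonempty} r_κ^± · π_κ satisfy χ⁻(x) ≤ φ(x) ≤ χ⁺(x) for all x ∈ K, and Σ_{κ : support of π_κ nonempty} (r_κ⁺ − r_κ⁻) · ∏_{i=1}^n ∫ u_{i,κ(i)} dμ_i ≤ 2ε. -/

import Mathlib

open MeasureTheory
open scoped Classical

private lemma stmt6_prod_diff {ι : Type*} [DecidableEq ι] {C δ : ℝ} (hC : 1 ≤ C) (hδ : 0 ≤ δ)
    (s : Finset ι) :
    ∀ a b : ι → ℝ, (∀ i ∈ s, |a i| ≤ C) → (∀ i ∈ s, |b i| ≤ C) →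
      (∀ i ∈ s, |a i - b i| ≤ δ) →
      |(∏ i ∈ s, a i) - ∏ i ∈ s, b i| ≤ s.card * C ^ s.card * δ := by
  have hC0 : (0 : ℝ) ≤ C := le_trans zero_le_one hC
  induction s using Finset.induction_on with
  | empty => intro a b _ _ _; simp
  | @insert i s his ih =>
    intro a b ha hb hd
    have IH := ih a b (fun j hj => ha j (Finset.mem_insert_of_mem hj))
      (fun j hj => hb j (Finset.mem_insert_of_mem hj))
      (fun j hj => hd j (Finset.mem_insert_of_mem hj))
    rw [Finset.prod_insert his, Finset.prod_insert his, Finset.card_insert_of_notMem his]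
    push_cast
    have habs : |∏ j ∈ s, a j| ≤ C ^ s.card := by
      rw [Finset.abs_prod]
      calc ∏ j ∈ s, |a j| ≤ ∏ j ∈ s, C :=
            Finset.prod_le_prod (fun j _ => abs_nonneg _)
              (fun j hj => ha j (Finset.mem_insert_of_mem hj))
        _ = C ^ s.card := Finset.prod_const C
    have key : a i * ∏ j ∈ s, a j - b i * ∏ j ∈ s, b j
        = (a i - b i) * ∏ j ∈ s, a j + b i * ((∏ j ∈ s, a j) - ∏ j ∈ s, b j) := by ring
    rw [key]
    calc |(a i - b i) * ∏ j ∈ s, a j + b i * ((∏ j ∈ s, a j) - ∏ j ∈ s, b j)|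
        ≤ |(a i - b i) * ∏ j ∈ s, a j| + |b i * ((∏ j ∈ s, a j) - ∏ j ∈ s, b j)| :=
          abs_add_le _ _
      _ = |a i - b i| * |∏ j ∈ s, a j| + |b i| * |(∏ j ∈ s, a j) - ∏ j ∈ s, b j| := by
          rw [abs_mul, abs_mul]
      _ ≤ δ * C ^ s.card + C * (s.card * C ^ s.card * δ) := by
          refine add_le_add (mul_le_mul (hd i (Finset.mem_insert_self i s)) habs
            (abs_nonneg _) hδ) (mul_le_mul (hb i (Finset.mem_insert_self i s)) IH
            (abs_nonneg _) hC0)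
      _ ≤ ((s.card : ℝ) + 1) * C ^ (s.card + 1) * δ := by
          have h1 : C ^ s.card ≤ C ^ (s.card + 1) := by
            rw [pow_succ]
            nlinarith [pow_nonneg hC0 s.card]
          have h2 : (0 : ℝ) ≤ C ^ s.card := pow_nonneg hC0 _
          have h3 : (0 : ℝ) ≤ (s.card : ℝ) := Nat.cast_nonneg _
          have h4 : δ * C ^ s.card ≤ δ * C ^ (s.card + 1) :=
            mul_le_mul_of_nonneg_left h1 hδ
          rw [pow_succ] at *
          nlinarith

private lemma stmt6_partition {X : Type*} [TopologicalSpace X] [CompactSpace X] [T2Space X]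
    (V : X → Set X) (hVo : ∀ y, IsOpen (V y)) (hVmem : ∀ y, y ∈ V y) :
    ∃ (F : ℕ) (u : Fin F → C(X, ℝ)),
      (∀ k x, u k x ∈ Set.Icc (0 : ℝ) 1) ∧ (∀ x, ∑ k, u k x = 1) ∧
      (∀ k, ∃ y, Function.support (u k) ⊆ V y) := by
  obtain ⟨t, ht⟩ := isCompact_univ.elim_finite_subcover V hVo
    (fun x _ => Set.mem_iUnion.2 ⟨x, hVmem x⟩)
  have hU : (Set.univ : Set X) ⊆ ⋃ y : t, V y := by
    intro x hx
    rcases Set.mem_iUnion₂.1 (ht hx) with ⟨y, hy, hxy⟩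
    exact Set.mem_iUnion.2 ⟨⟨y, hy⟩, hxy⟩
  obtain ⟨f, hf⟩ := PartitionOfUnity.exists_isSubordinate isClosed_univ
    (fun y : t => V y) (fun y => hVo y) hU
  refine ⟨Fintype.card t, fun k => f ((Fintype.equivFin t).symm k), ?_, ?_, ?_⟩
  · exact fun k x => ⟨f.nonneg _ x, f.le_one _ x⟩
  · intro x
    have h1 := f.sum_eq_one (Set.mem_univ x)
    rw [finsum_eq_sum_of_fintype] at h1
    rw [← h1]
    exact Equiv.sum_comp (Fintype.equivFin t).symm (fun i => f i x)
  · intro k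
    exact ⟨((Fintype.equivFin t).symm k : X), (subset_tsupport _).trans (hf _)⟩

/-- From a sandwich of `φ` between sums of products of continuous functions of the
separate coordinates with small integral gap, one can build grid partitions of unity
`u i` on the coordinate spaces so that the corresponding step functions `χ⁻, χ⁺` built
from the infima and suprema of `φ` on the supports of the grid cells sandwich `φ`, with
total weighted oscillation at most `2ε`. -/
theorem stmt6 {n : ℕ} {K : Type*} [TopologicalSpace K] [CompactSpace K] [T2Space K]
    [MeasurableSpace K] [BorelSpace K]
    {Ki : Fin n → Type*} [∀ i, TopologicalSpace (Ki i)] [∀ i, CompactSpace (Ki i)]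
    [∀ i, T2Space (Ki i)] [∀ i, MeasurableSpace (Ki i)] [∀ i, BorelSpace (Ki i)]
    (π : ∀ i, K → Ki i) (hπ : ∀ i, Continuous (π i))
    (hsurj : Function.Surjective (fun x : K => (fun i => π i x : ∀ i, Ki i)))
    (μ : ∀ i, Measure (Ki i)) (hprob : ∀ i, IsProbabilityMeasure (μ i))
    (hreg : ∀ i, (μ i).Regular)
    (φ : C(K, ℝ)) (ε : ℝ) (hε : 0 < ε)
    (m : ℕ) (θm θp : ∀ i, Fin m → C(Ki i, ℝ))
    (hsand : ∀ x : K, (∑ j : Fin m, ∏ i : Fin n, θm i j (π i x)) ≤ φ x ∧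
      φ x ≤ ∑ j : Fin m, ∏ i : Fin n, θp i j (π i x))
    (hgap : (∑ j : Fin m, ∏ i : Fin n, ∫ y, θp i j y ∂(μ i)) -
      (∑ j : Fin m, ∏ i : Fin n, ∫ y, θm i j y ∂(μ i)) ≤ ε) :
    ∃ (F : Fin n → ℕ) (u : ∀ i, Fin (F i) → C(Ki i, ℝ)),
      (∀ i k x, u i k x ∈ Set.Icc (0 : ℝ) 1) ∧
      (∀ i x, (∑ k : Fin (F i), u i k x) = 1) ∧
      (∀ x : K,
        (∑ κ : ∀ i, Fin (F i),
          if ∃ z : K, 0 < ∏ i : Fin n, u i (κ i) (π i z) then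
            sInf {t : ℝ | ∃ y : K, (0 < ∏ i : Fin n, u i (κ i) (π i y)) ∧ φ y = t} *
              ∏ i : Fin n, u i (κ i) (π i x)
          else 0) ≤ φ x ∧
        φ x ≤ ∑ κ : ∀ i, Fin (F i),
          if ∃ z : K, 0 < ∏ i : Fin n, u i (κ i) (π i z) then
            sSup {t : ℝ | ∃ y : K, (0 < ∏ i : Fin n, u i (κ i) (π i y)) ∧ φ y = t} *
              ∏ i : Fin n, u i (κ i) (π i x)
          else 0) ∧
      (∑ κ : ∀ i, Fin (F i),
        if ∃ z : K, 0 < ∏ i : Fin n, u i (κ i) (π i z) then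
          (sSup {t : ℝ | ∃ y : K, (0 < ∏ i : Fin n, u i (κ i) (π i y)) ∧ φ y = t} -
            sInf {t : ℝ | ∃ y : K, (0 < ∏ i : Fin n, u i (κ i) (π i y)) ∧ φ y = t}) *
            ∏ i : Fin n, ∫ y, u i (κ i) y ∂(μ i)
        else 0) ≤ 2 * ε := by
  classical
  -- constants
  set Cb : ℝ := 1 + ∑ j : Fin m, ∑ i : Fin n, (‖θm i j‖ + ‖θp i j‖) with hCbdef
  have hsum0 : 0 ≤ ∑ j : Fin m, ∑ i : Fin n, (‖θm i j‖ + ‖θp i j‖) :=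
    Finset.sum_nonneg fun j _ => Finset.sum_nonneg fun i _ => by positivity
  have hCb1 : 1 ≤ Cb := by rw [hCbdef]; linarith
  have hbound : ∀ i j, ‖θm i j‖ + ‖θp i j‖ ≤ Cb - 1 := by
    intro i j
    calc ‖θm i j‖ + ‖θp i j‖ ≤ ∑ i' : Fin n, (‖θm i' j‖ + ‖θp i' j‖) :=
          Finset.single_le_sum (f := fun i' => ‖θm i' j‖ + ‖θp i' j‖)
            (fun i' _ => by positivity) (Finset.mem_univ i)
      _ ≤ ∑ j' : Fin m, ∑ i' : Fin n, (‖θm i' j'‖ + ‖θp i' j'‖) :=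
          Finset.single_le_sum (f := fun j' => ∑ i' : Fin n, (‖θm i' j'‖ + ‖θp i' j'‖))
            (fun j' _ => Finset.sum_nonneg fun i' _ => by positivity) (Finset.mem_univ j)
      _ = Cb - 1 := by rw [hCbdef]; ring
  have hθmC : ∀ i j (x : Ki i), |θm i j x| ≤ Cb := by
    intro i j x
    have h1 : |θm i j x| ≤ ‖θm i j‖ := by
      simpa [Real.norm_eq_abs] using (θm i j).norm_coe_le_norm x
    have h2 := hbound i j
    have h3 : (0 : ℝ) ≤ ‖θp i j‖ := norm_nonneg _
    linarith
  have hθpC : ∀ i j (x : Ki i), |θp i j x| ≤ Cb := by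
    intro i j x
    have h1 : |θp i j x| ≤ ‖θp i j‖ := by
      simpa [Real.norm_eq_abs] using (θp i j).norm_coe_le_norm x
    have h2 := hbound i j
    have h3 : (0 : ℝ) ≤ ‖θm i j‖ := norm_nonneg _
    linarith
  set D : ℝ := (m : ℝ) * (n : ℝ) * Cb ^ n with hDdef
  have hD0 : 0 ≤ D := by rw [hDdef]; positivity
  set δ : ℝ := (ε / 2) / (D + 1) with hδdef
  have hδpos : 0 < δ := div_pos (half_pos hε) (by linarith)
  have hkey : D * δ ≤ ε / 2 := by
    rw [hδdef]
    rw [mul_div_assoc']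
    rw [div_le_iff₀ (by linarith : (0:ℝ) < D + 1)]
    nlinarith
  -- partitions of unity on each coordinate space
  have hex : ∀ i, ∃ (F : ℕ) (u : Fin F → C(Ki i, ℝ)),
      (∀ k x, u k x ∈ Set.Icc (0 : ℝ) 1) ∧ (∀ x, ∑ k, u k x = 1) ∧
      (∀ k x x', 0 < u k x → 0 < u k x' →
        ∀ j, |θm i j x - θm i j x'| ≤ δ ∧ |θp i j x - θp i j x'| ≤ δ) := by
    intro i
    set V : Ki i → Set (Ki i) := fun y =>
      ⋂ j : Fin m, ({z | |θm i j z - θm i j y| < δ / 2} ∩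
        {z | |θp i j z - θp i j y| < δ / 2}) with hVdef
    have hVo : ∀ y, IsOpen (V y) := by
      intro y
      refine isOpen_iInter_of_finite fun j => IsOpen.inter ?_ ?_
      · exact isOpen_lt (Continuous.abs (((θm i j).continuous).sub continuous_const))
          continuous_const
      · exact isOpen_lt (Continuous.abs (((θp i j).continuous).sub continuous_const))
          continuous_const
    have hVmem : ∀ y, y ∈ V y := by
      intro y
      refine Set.mem_iInter.2 fun j => ⟨?_, ?_⟩ <;>
        simp [half_pos hδpos]
    obtain ⟨F, u, h1, h2, h3⟩ := stmt6_partition V hVo hVmem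
    refine ⟨F, u, h1, h2, ?_⟩
    intro k x x' hx hx' j
    obtain ⟨y, hy⟩ := h3 k
    have hxV : x ∈ V y := hy (Function.mem_support.2 hx.ne')
    have hx'V : x' ∈ V y := hy (Function.mem_support.2 hx'.ne')
    have hxj := Set.mem_iInter.1 hxV j
    have hx'j := Set.mem_iInter.1 hx'V j
    constructor
    · have h2' : |θm i j y - θm i j x'| < δ / 2 := by
        rw [abs_sub_comm]; exact hx'j.1
      calc |θm i j x - θm i j x'|
          ≤ |θm i j x - θm i j y| + |θm i j y - θm i j x'| := abs_sub_le _ _ _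
        _ ≤ δ := by
            have h1' : |θm i j x - θm i j y| < δ / 2 := hxj.1
            linarith
    · have h2' : |θp i j y - θp i j x'| < δ / 2 := by
        rw [abs_sub_comm]; exact hx'j.2
      calc |θp i j x - θp i j x'|
          ≤ |θp i j x - θp i j y| + |θp i j y - θp i j x'| := abs_sub_le _ _ _
        _ ≤ δ := by
            have h1' : |θp i j x - θp i j y| < δ / 2 := hxj.2
            linarith
  choose F u hIcc hsum hsep using hex
  -- basic facts
  have hu0 : ∀ i k (x : Ki i), 0 ≤ u i k x := fun i k x => (hIcc i k x).1
  have hfac : ∀ (κ : ∀ i, Fin (F i)) (p : ∀ i, Ki i),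
      0 < ∏ i, u i (κ i) (p i) → ∀ i, 0 < u i (κ i) (p i) := by
    intro κ p hp i
    rcases (hu0 i (κ i) (p i)).lt_or_eq with h | h
    · exact h
    · exact absurd (Finset.prod_eq_zero (Finset.mem_univ i) h.symm) (ne_of_gt hp)
  have hφb : ∀ y : K, |φ y| ≤ ‖φ‖ := by
    intro y; simpa [Real.norm_eq_abs] using φ.norm_coe_le_norm y
  have hSbddA : ∀ κ : ∀ i, Fin (F i),
      BddAbove {t : ℝ | ∃ y : K, (0 < ∏ i : Fin n, u i (κ i) (π i y)) ∧ φ y = t} := by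
    intro κ
    exact ⟨‖φ‖, by rintro t ⟨y, hy, rfl⟩; exact (abs_le.1 (hφb y)).2⟩
  have hSbddB : ∀ κ : ∀ i, Fin (F i),
      BddBelow {t : ℝ | ∃ y : K, (0 < ∏ i : Fin n, u i (κ i) (π i y)) ∧ φ y = t} := by
    intro κ
    exact ⟨-‖φ‖, by rintro t ⟨y, hy, rfl⟩; exact (abs_le.1 (hφb y)).1⟩
  have honeP : ∀ p : ∀ i, Ki i, (∑ κ : ∀ i, Fin (F i), ∏ i, u i (κ i) (p i)) = 1 := by
    intro p
    rw [← Fintype.prod_sum (fun i k => u i k (p i))]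
    simp [hsum]
  have honeK : ∀ x : K, (∑ κ : ∀ i, Fin (F i), ∏ i, u i (κ i) (π i x)) = 1 :=
    fun x => honeP (fun i => π i x)
  -- oscillation bound over a cell
  have hosc : ∀ (θ : ∀ i, Fin m → C(Ki i, ℝ)), (∀ i j x, |θ i j x| ≤ Cb) →
      ∀ (q q' : ∀ i, Ki i), (∀ i j, |θ i j (q i) - θ i j (q' i)| ≤ δ) →
      |(∑ j : Fin m, ∏ i, θ i j (q i)) - ∑ j : Fin m, ∏ i, θ i j (q' i)| ≤ ε / 2 := by
    intro θ hθC q q' hclose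
    have hperj : ∀ j : Fin m,
        |(∏ i, θ i j (q i)) - ∏ i, θ i j (q' i)| ≤ (n : ℝ) * Cb ^ n * δ := by
      intro j
      have := stmt6_prod_diff hCb1 hδpos.le Finset.univ (fun i => θ i j (q i))
        (fun i => θ i j (q' i)) (fun i _ => hθC i j _) (fun i _ => hθC i j _)
        (fun i _ => hclose i j)
      simpa [Finset.card_univ] using this
    calc |(∑ j : Fin m, ∏ i, θ i j (q i)) - ∑ j : Fin m, ∏ i, θ i j (q' i)|
        = |∑ j : Fin m, ((∏ i, θ i j (q i)) - ∏ i, θ i j (q' i))| := by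
          rw [Finset.sum_sub_distrib]
      _ ≤ ∑ j : Fin m, |(∏ i, θ i j (q i)) - ∏ i, θ i j (q' i)| :=
          Finset.abs_sum_le_sum_abs _ _
      _ ≤ ∑ _j : Fin m, (n : ℝ) * Cb ^ n * δ := Finset.sum_le_sum fun j _ => hperj j
      _ = D * δ := by
          rw [Finset.sum_const, Finset.card_univ, Fintype.card_fin, nsmul_eq_mul, hDdef]
          ring
      _ ≤ ε / 2 := hkey
  refine ⟨F, u, hIcc, hsum, ?_, ?_⟩
  · -- sandwich
    intro x
    have hcell0 : ∀ κ : ∀ i, Fin (F i), 0 ≤ ∏ i, u i (κ i) (π i x) :=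
      fun κ => Finset.prod_nonneg fun i _ => hu0 i (κ i) (π i x)
    constructor
    · calc (∑ κ : ∀ i, Fin (F i),
          if ∃ z : K, 0 < ∏ i : Fin n, u i (κ i) (π i z) then
            sInf {t : ℝ | ∃ y : K, (0 < ∏ i : Fin n, u i (κ i) (π i y)) ∧ φ y = t} *
              ∏ i : Fin n, u i (κ i) (π i x)
          else 0)
          ≤ ∑ κ : ∀ i, Fin (F i), φ x * ∏ i, u i (κ i) (π i x) := by
            refine Finset.sum_le_sum fun κ _ => ?_
            rcases (hcell0 κ).lt_or_eq with hpos | h0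
            · rw [if_pos ⟨x, hpos⟩]
              exact mul_le_mul_of_nonneg_right (csInf_le (hSbddB κ) ⟨x, hpos, rfl⟩)
                (hcell0 κ)
            · rw [← h0]
              simp
        _ = φ x * ∑ κ : ∀ i, Fin (F i), ∏ i, u i (κ i) (π i x) := by
            rw [Finset.mul_sum]
        _ = φ x := by rw [honeK x, mul_one]
    · calc φ x = φ x * ∑ κ : ∀ i, Fin (F i), ∏ i, u i (κ i) (π i x) := by
            rw [honeK x, mul_one]
        _ = ∑ κ : ∀ i, Fin (F i), φ x * ∏ i, u i (κ i) (π i x) := by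
            rw [Finset.mul_sum]
        _ ≤ _ := by
            refine Finset.sum_le_sum fun κ _ => ?_
            rcases (hcell0 κ).lt_or_eq with hpos | h0
            · rw [if_pos ⟨x, hpos⟩]
              exact mul_le_mul_of_nonneg_right (le_csSup (hSbddA κ) ⟨x, hpos, rfl⟩)
                (hcell0 κ)
            · rw [← h0]
              simp
  · -- the gap bound
    letI mKi : ∀ i, MeasureSpace (Ki i) := fun i => ⟨μ i⟩
    haveI hvolprob : ∀ i, IsProbabilityMeasure (volume : Measure (Ki i)) := hprob
    haveI hvolsf : ∀ i, SigmaFinite (volume : Measure (Ki i)) := fun i => inferInstance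
    haveI hPprob : IsProbabilityMeasure (volume : Measure (∀ i, Ki i)) := by
      exact MeasureTheory.Measure.pi.instIsProbabilityMeasure (fun i => volume)
    have hcont_int : ∀ (i) (f : C(Ki i, ℝ)), Integrable (fun y => f y) (μ i) := by
      intro i f
      exact f.continuous.integrable_of_hasCompactSupport
        ((isClosed_tsupport _).isCompact)
    set T : (∀ i, Fin (F i)) → ℝ := fun κ =>
      if ∃ z : K, 0 < ∏ i : Fin n, u i (κ i) (π i z) then
        sSup {t : ℝ | ∃ y : K, (0 < ∏ i : Fin n, u i (κ i) (π i y)) ∧ φ y = t} -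
          sInf {t : ℝ | ∃ y : K, (0 < ∏ i : Fin n, u i (κ i) (π i y)) ∧ φ y = t}
      else 0 with hTdef
    -- pointwise bound on the product space
    have hpt : ∀ p : ∀ i, Ki i,
        (∑ κ : ∀ i, Fin (F i), T κ * ∏ i, u i (κ i) (p i)) ≤
          (∑ j : Fin m, ∏ i, θp i j (p i)) - (∑ j : Fin m, ∏ i, θm i j (p i)) + ε := by
      intro p
      have hub : ∀ κ : ∀ i, Fin (F i), T κ * ∏ i, u i (κ i) (p i) ≤
          ((∑ j : Fin m, ∏ i, θp i j (p i)) - (∑ j : Fin m, ∏ i, θm i j (p i)) + ε) *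
            ∏ i, u i (κ i) (p i) := by
        intro κ
        have hc0 : 0 ≤ ∏ i, u i (κ i) (p i) :=
          Finset.prod_nonneg fun i _ => hu0 i (κ i) (p i)
        rcases hc0.lt_or_eq with hpos | h0
        · refine mul_le_mul_of_nonneg_right ?_ hc0
          obtain ⟨z, hz⟩ := hsurj p
          have hzpos : 0 < ∏ i : Fin n, u i (κ i) (π i z) := by
            rw [← hz] at hpos
            simpa using hpos
          have hκ : ∃ z : K, 0 < ∏ i : Fin n, u i (κ i) (π i z) := ⟨z, hzpos⟩
          rw [hTdef]
          simp only []
          rw [if_pos hκ]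
          have hq : ∀ i, 0 < u i (κ i) (p i) := hfac κ p hpos
          have hSne : {t : ℝ | ∃ y : K, (0 < ∏ i : Fin n, u i (κ i) (π i y)) ∧
              φ y = t}.Nonempty := ⟨φ z, z, hzpos, rfl⟩
          have hsup : sSup {t : ℝ | ∃ y : K, (0 < ∏ i : Fin n, u i (κ i) (π i y)) ∧
              φ y = t} ≤ (∑ j : Fin m, ∏ i, θp i j (p i)) + ε / 2 := by
            refine csSup_le hSne ?_
            rintro t ⟨y, hy, rfl⟩
            have hqy : ∀ i, 0 < u i (κ i) (π i y) := hfac κ (fun i => π i y) hy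
            have h1 : φ y ≤ ∑ j : Fin m, ∏ i, θp i j (π i y) := (hsand y).2
            have h2 := hosc θp hθpC (fun i => π i y) p
              (fun i j => (hsep i (κ i) (π i y) (p i) (hqy i) (hq i) j).2)
            have h3 := (abs_le.1 h2).2
            linarith
          have hinf : (∑ j : Fin m, ∏ i, θm i j (p i)) - ε / 2 ≤
              sInf {t : ℝ | ∃ y : K, (0 < ∏ i : Fin n, u i (κ i) (π i y)) ∧ φ y = t} := by
            refine le_csInf hSne ?_
            rintro t ⟨y, hy, rfl⟩
            have hqy : ∀ i, 0 < u i (κ i) (π i y) := hfac κ (fun i => π i y) hy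
            have h1 : (∑ j : Fin m, ∏ i, θm i j (π i y)) ≤ φ y := (hsand y).1
            have h2 := hosc θm hθmC p (fun i => π i y)
              (fun i j => (hsep i (κ i) (p i) (π i y) (hq i) (hqy i) j).1)
            have h3 := (abs_le.1 h2).2
            linarith
          linarith
        · rw [← h0, mul_zero, mul_zero]
      calc (∑ κ : ∀ i, Fin (F i), T κ * ∏ i, u i (κ i) (p i))
          ≤ ∑ κ : ∀ i, Fin (F i),
            ((∑ j : Fin m, ∏ i, θp i j (p i)) - (∑ j : Fin m, ∏ i, θm i j (p i)) + ε) *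
              ∏ i, u i (κ i) (p i) := Finset.sum_le_sum fun κ _ => hub κ
        _ = ((∑ j : Fin m, ∏ i, θp i j (p i)) - (∑ j : Fin m, ∏ i, θm i j (p i)) + ε) *
            ∑ κ : ∀ i, Fin (F i), ∏ i, u i (κ i) (p i) := by rw [Finset.mul_sum]
        _ = _ := by rw [honeP p, mul_one]
    -- integrability
    have hcell_int : ∀ κ : ∀ i, Fin (F i),
        Integrable (fun p : ∀ i, Ki i => ∏ i, u i (κ i) (p i)) volume := by
      intro κ
      exact Integrable.fintype_prod_dep (f := fun i y => u i (κ i) y)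
        (fun i => hcont_int i (u i (κ i)))
    have hψp_int : Integrable (fun p : ∀ i, Ki i => ∑ j : Fin m, ∏ i, θp i j (p i))
        volume := by
      refine integrable_finset_sum _ fun j _ => ?_
      exact Integrable.fintype_prod_dep (f := fun i y => θp i j y)
        (fun i => hcont_int i (θp i j))
    have hψm_int : Integrable (fun p : ∀ i, Ki i => ∑ j : Fin m, ∏ i, θm i j (p i))
        volume := by
      refine integrable_finset_sum _ fun j _ => ?_
      exact Integrable.fintype_prod_dep (f := fun i y => θm i j y)
        (fun i => hcont_int i (θm i j))
    have hsum_int : Integrable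
        (fun p : ∀ i, Ki i => ∑ κ : ∀ i, Fin (F i), T κ * ∏ i, u i (κ i) (p i)) volume :=
      integrable_finset_sum _ fun κ _ => (hcell_int κ).const_mul _
    -- integral identities
    have hcell_val : ∀ κ : ∀ i, Fin (F i),
        (∫ p : ∀ i, Ki i, ∏ i, u i (κ i) (p i)) = ∏ i, ∫ y, u i (κ i) y ∂(μ i) :=
      fun κ => MeasureTheory.integral_fintype_prod_eq_prod (ι := Fin n)
        (fun i y => u i (κ i) y)
    have hψp_val : (∫ p : ∀ i, Ki i, ∑ j : Fin m, ∏ i, θp i j (p i)) =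
        ∑ j : Fin m, ∏ i, ∫ y, θp i j y ∂(μ i) := by
      rw [integral_finset_sum (μ := volume) _ (fun j _ => Integrable.fintype_prod_dep
        (f := fun i y => θp i j y) (fun i => hcont_int i (θp i j)))]
      exact Finset.sum_congr rfl fun j _ =>
        MeasureTheory.integral_fintype_prod_eq_prod (ι := Fin n) (fun i y => θp i j y)
    have hψm_val : (∫ p : ∀ i, Ki i, ∑ j : Fin m, ∏ i, θm i j (p i)) =
        ∑ j : Fin m, ∏ i, ∫ y, θm i j y ∂(μ i) := by
      rw [integral_finset_sum (μ := volume) _ (fun j _ => Integrable.fintype_prod_dep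
        (f := fun i y => θm i j y) (fun i => hcont_int i (θm i j)))]
      exact Finset.sum_congr rfl fun j _ =>
        MeasureTheory.integral_fintype_prod_eq_prod (ι := Fin n) (fun i y => θm i j y)
    have hstep : (∑ κ : ∀ i, Fin (F i),
        if ∃ z : K, 0 < ∏ i : Fin n, u i (κ i) (π i z) then
          (sSup {t : ℝ | ∃ y : K, (0 < ∏ i : Fin n, u i (κ i) (π i y)) ∧ φ y = t} -
            sInf {t : ℝ | ∃ y : K, (0 < ∏ i : Fin n, u i (κ i) (π i y)) ∧ φ y = t}) *
            ∏ i : Fin n, ∫ y, u i (κ i) y ∂(μ i)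
        else 0) = ∑ κ : ∀ i, Fin (F i), T κ * ∏ i, ∫ y, u i (κ i) y ∂(μ i) := by
      refine Finset.sum_congr rfl fun κ _ => ?_
      rw [hTdef]
      simp only []
      split_ifs with h
      · rfl
      · rw [zero_mul]
    rw [hstep]
    calc (∑ κ : ∀ i, Fin (F i), T κ * ∏ i, ∫ y, u i (κ i) y ∂(μ i))
        = ∑ κ : ∀ i, Fin (F i), T κ * ∫ p : ∀ i, Ki i, ∏ i, u i (κ i) (p i) := by
          exact Finset.sum_congr rfl fun κ _ => by rw [hcell_val κ]
      _ = ∑ κ : ∀ i, Fin (F i), ∫ p : ∀ i, Ki i, T κ * ∏ i, u i (κ i) (p i) := by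
          exact Finset.sum_congr rfl fun κ _ => (integral_const_mul _ _).symm
      _ = ∫ p : ∀ i, Ki i, ∑ κ : ∀ i, Fin (F i), T κ * ∏ i, u i (κ i) (p i) :=
          (integral_finset_sum _ fun κ _ => (hcell_int κ).const_mul _).symm
      _ ≤ ∫ p : ∀ i, Ki i,
          ((∑ j : Fin m, ∏ i, θp i j (p i)) - (∑ j : Fin m, ∏ i, θm i j (p i)) + ε) := by
          refine integral_mono hsum_int ?_ hpt
          exact (hψp_int.sub hψm_int).add (integrable_const ε)
      _ = (∑ j : Fin m, ∏ i, ∫ y, θp i j y ∂(μ i)) -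
            (∑ j : Fin m, ∏ i, ∫ y, θm i j y ∂(μ i)) + ε := by
          have hsub_int : Integrable (fun p : ∀ i, Ki i =>
              (∑ j : Fin m, ∏ i, θp i j (p i)) - ∑ j : Fin m, ∏ i, θm i j (p i)) volume :=
            hψp_int.sub hψm_int
          rw [integral_add hsub_int (integrable_const ε),
            integral_sub hψp_int hψm_int, hψp_val, hψm_val, integral_const]
          simp
      _ ≤ 2 * ε := by linarith
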